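/- Let N_k satisfy N_1 = 1, N_2 = 2, N_k = N_{k-1} + (k-1)N_{k-2} for k ≥ 3. Fix k ≥ 3 and define P₀ = 1, P₁ = k-1, P₂ = k-2, and P_j = (P₀ + P₁ + ⋯ + P_{j-2})·(k-j) for j ≥ 3. Then N_k = 2·(P₀ + P₁ + ⋯ + P_{k-3}) + P_{k-2}. -/

import Mathlib

theorem matching_count_closed_form (N : ℕ → ℕ)
    (hN1 : N 1 = 1) (hN2 : N 2 = 2)
    (hNrec : ∀ m, 3 ≤ m → N m = N (m - 1) + (m - 1) * N (m - 2))
    (k : ℕ) (hk : 3 ≤ k) (P : ℕ → ℕ)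
    (hP0 : P 0 = 1) (hP1 : P 1 = k - 1) (hP2 : P 2 = k - 2)
    (hPrec : ∀ j, 3 ≤ j → P j = (∑ i ∈ Finset.range (j - 1), P i) * (k - j)) :
    N k = 2 * (∑ j ∈ Finset.range (k - 2), P j) + P (k - 2) := by
  have key : ∀ j, 1 ≤ j → j ≤ k - 2 →
      N k = (∑ i ∈ Finset.range j, P i) * N (k - j) + P j * N (k - j - 1) := by
    intro j hj1
    induction j, hj1 using Nat.le_induction with
    | base =>
      intro _
      have h := hNrec k hk
      simp only [Finset.sum_range_one, hP0, hP1, one_mul]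
      rw [show k - 1 - 1 = k - 2 from rfl]
      exact h
    | succ j hj IH =>
      intro hle
      have hle' : j ≤ k - 2 := by omega
      have IH' := IH hle'
      have hkj : 3 ≤ k - j := by omega
      have hrec := hNrec (k - j) hkj
      have e1 : k - (j + 1) = k - j - 1 := by omega
      have hPj1 : P (j + 1) = (∑ i ∈ Finset.range j, P i) * (k - j - 1) := by
        rcases Nat.lt_or_ge j 2 with h2 | h2
        · interval_cases j
          · simp only [Finset.sum_range_one, hP0, hP2, one_mul]
            omega
        · have h3 := hPrec (j + 1) (by omega)
          simpa [e1] using h3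
      rw [e1, show k - j - 1 - 1 = k - j - 2 from rfl, Finset.sum_range_succ, hPj1,
        IH', hrec]
      ring
  have h := key (k - 2) (by omega) le_rfl
  have e1 : k - (k - 2) = 2 := by omega
  rw [e1, show (2:ℕ) - 1 = 1 from rfl, hN1, hN2] at h
  rw [h]; ring
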